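/- Let G be a group with normal subgroups G₁, …, Gₙ such that [G_i, G_j] = 1 for i ≠ j and G = G₁⋯Gₙ. If H_i is a pronormal subgroup of G_i for each i, then H = ⟨H₁, …, Hₙ⟩ is pronormal in G. -/

import Mathlib

open Pointwise

/-- `n` is a π-number: every prime dividing `n` lies in `π`. -/
def IsPiNumber (π : Set ℕ) (n : ℕ) : Prop := ∀ p : ℕ, p.Prime → p ∣ n → p ∈ π

/-- `H` is a π-Hall subgroup of `G`. -/
def IsHall (π : Set ℕ) {G : Type*} [Group G] (H : Subgroup G) : Prop :=
  IsPiNumber π (Nat.card H) ∧ ∀ p : ℕ, p.Prime → p ∣ H.index → p ∉ π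

/-- `H` is pronormal in `G`: for every `g`, `H` and `H^g = g⁻¹Hg` are conjugate in `⟨H, H^g⟩`. -/
def Pronormal {G : Type*} [Group G] (H : Subgroup G) : Prop :=
  ∀ g : G, ∃ x ∈ H ⊔ MulAut.conj g⁻¹ • H,
    MulAut.conj x⁻¹ • H = MulAut.conj g⁻¹ • H

/-- `H` is strongly pronormal in `G`. -/
def StronglyPronormal {G : Type*} [Group G] (H : Subgroup G) : Prop :=
  ∀ K : Subgroup G, K ≤ H → ∀ g : G, ∃ x ∈ H ⊔ MulAut.conj g⁻¹ • K,
    MulAut.conj x⁻¹ • (MulAut.conj g⁻¹ • K) ≤ H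

/-- `G` is π-separable. -/
def IsPiSeparable (π : Set ℕ) (G : Type*) [Group G] : Prop :=
  ∃ (n : ℕ) (c : Fin (n + 1) → Subgroup G),
    c 0 = ⊥ ∧ c (Fin.last n) = ⊤ ∧ Monotone c ∧ (∀ i, (c i).Normal) ∧
    ∀ i : Fin n,
      IsPiNumber π (Nat.card (↥(c i.succ) ⧸ (c i.castSucc).subgroupOf (c i.succ))) ∨
      IsPiNumber πᶜ (Nat.card (↥(c i.succ) ⧸ (c i.castSucc).subgroupOf (c i.succ)))

/-- `G` satisfies `C_π`. -/
def SatisfiesC (π : Set ℕ) (G : Type*) [Group G] : Prop :=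
  (∃ H : Subgroup G, IsHall π H) ∧
    ∀ H K : Subgroup G, IsHall π H → IsHall π K → ∃ g : G, MulAut.conj g • H = K

section Aux
variable {G : Type*} [Group G]

/-- If `c` commutes with everything in `N` and `K ≤ N`, conjugation by `c` fixes `K`. -/
lemma conj_smul_eq_self_of_commute {c : G} {N K : Subgroup G} (hK : K ≤ N)
    (hc : ∀ y ∈ N, Commute c y) : MulAut.conj c • K = K := by
  ext x
  rw [Subgroup.mem_pointwise_smul_iff_inv_smul_mem]
  have hx : (MulAut.conj c)⁻¹ • x = c⁻¹ * x * c := by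
    simp [MulAut.smul_def]
  rw [hx]
  constructor
  · intro h
    have hcz := (hc _ (hK h)).eq
    have hx2 : x = c⁻¹ * x * c := by
      have : x * c = (c⁻¹ * x * c) * c := by rw [← hcz]; group
      exact mul_right_cancel this
    rwa [← hx2] at h
  · intro h
    have hcz := (hc _ (hK h)).eq
    have hx2 : c⁻¹ * x * c = x := by rw [mul_assoc, ← hcz]; group
    rwa [hx2]

lemma map_subtype_conj_smul (N : Subgroup G) (a : ↥N) (K : Subgroup ↥N) :
    (MulAut.conj a • K).map N.subtype = MulAut.conj (a : G) • K.map N.subtype := by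
  rw [Subgroup.pointwise_smul_def, Subgroup.pointwise_smul_def, Subgroup.map_map
    (f := (MulDistribMulAction.toMonoidEnd _ _ (MulAut.conj a) : ↥N →* ↥N)),
    Subgroup.map_map (g := (MulDistribMulAction.toMonoidEnd _ _ (MulAut.conj (a : G)) : G →* G))]
  ext z
  simp only [Subgroup.mem_map, MonoidHom.comp_apply]
  constructor
  · rintro ⟨y, hy, rfl⟩
    exact ⟨y, hy, by simp [MulAut.conj]⟩
  · rintro ⟨y, hy, rfl⟩
    exact ⟨y, hy, by simp [MulAut.conj]⟩

end Aux

theorem stmt6 (G : Type*) [Group G] (n : ℕ) (Gs : Fin n → Subgroup G)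
    (hnorm : ∀ i, (Gs i).Normal)
    (hcomm : ∀ i j, i ≠ j → ∀ x ∈ Gs i, ∀ y ∈ Gs j, Commute x y)
    (hgen : (⨆ i, Gs i) = ⊤)
    (Hs : Fin n → Subgroup G) (hle : ∀ i, Hs i ≤ Gs i)
    (hprn : ∀ i, Pronormal ((Hs i).subgroupOf (Gs i))) :
    Pronormal (⨆ i, Hs i) := by
  classical
  -- key: conjugation of a subgroup of `Gs i` by a noncommProd only sees the `i`-th factor
  have key : ∀ (F : Fin n → G), (∀ j, F j ∈ Gs j) → ∀ (commF) (i : Fin n) (K : Subgroup G),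
      K ≤ Gs i →
      MulAut.conj (Finset.univ.noncommProd F commF)⁻¹ • K = MulAut.conj (F i)⁻¹ • K := by
    intro F hF commF i K hK
    set c := (Finset.univ.erase i).noncommProd F
      (fun x hx y hy hxy => commF (Finset.mem_univ x) (Finset.mem_univ y) hxy) with hc
    have hprod : F i * c = Finset.univ.noncommProd F commF :=
      Finset.mul_noncommProd_erase Finset.univ (Finset.mem_univ i) F commF
    have hcent : ∀ y ∈ Gs i, Commute c y := by
      intro y hy
      have : c ∈ Subgroup.centralizer (Gs i : Set G) := by
        refine Subgroup.noncommProd_mem _ _ ?_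
        intro j hj
        rw [Subgroup.mem_centralizer_iff]
        intro z hz
        exact (hcomm j i (Finset.ne_of_mem_erase hj) (F j) (hF j) z hz).eq.symm
      exact (Subgroup.mem_centralizer_iff.mp this y hy).symm
    have hKle : MulAut.conj (F i)⁻¹ • K ≤ Gs i := by
      have : MulAut.conj (F i)⁻¹ • K ≤ MulAut.conj (F i)⁻¹ • Gs i :=
        Subgroup.pointwise_smul_le_pointwise_smul_iff.mpr hK
      rwa [Subgroup.Normal.conj_smul_eq_self _ _ (h := hnorm i)] at this
    rw [← hprod, mul_inv_rev, map_mul, mul_smul]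
    exact conj_smul_eq_self_of_commute hKle (fun y hy => (hcent y hy).inv_left)
  intro g
  have hcomm' : Pairwise fun i j : Fin n => ∀ x y : G, x ∈ Gs i → y ∈ Gs j → Commute x y :=
    fun i j hij x y hx hy => hcomm i j hij x hx y hy
  have hg : g ∈ (Subgroup.noncommPiCoprod hcomm').range := by
    rw [Subgroup.noncommPiCoprod_range, hgen]; trivial
  obtain ⟨f, hf⟩ := hg
  have hfval : Subgroup.noncommPiCoprod hcomm' f
      = Finset.univ.noncommProd (fun j => ((f j : G)))
        (fun x _ y _ hxy => hcomm' hxy _ _ (f x).2 (f y).2) := by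
    exact Subgroup.noncommPiCoprod_apply hcomm' f
  choose x hx1 hx2 using fun i => hprn i (f i)
  -- transfer the per-factor data to `G`
  have hmap : ∀ i, ((Hs i).subgroupOf (Gs i)).map (Gs i).subtype = Hs i := by
    intro i
    rw [Subgroup.subgroupOf_map_subtype, inf_eq_left.mpr (hle i)]
  have hx1' : ∀ i, (x i : G) ∈ Hs i ⊔ MulAut.conj ((f i : G))⁻¹ • Hs i := by
    intro i
    have := Subgroup.mem_map_of_mem (Gs i).subtype (hx1 i)
    rwa [Subgroup.map_sup, map_subtype_conj_smul, hmap i, InvMemClass.coe_inv] at this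
  have hx2' : ∀ i, MulAut.conj ((x i : G))⁻¹ • Hs i = MulAut.conj ((f i : G))⁻¹ • Hs i := by
    intro i
    have := congrArg (Subgroup.map (Gs i).subtype) (hx2 i)
    rwa [map_subtype_conj_smul, map_subtype_conj_smul, hmap i, InvMemClass.coe_inv,
      InvMemClass.coe_inv] at this
  -- the conjugating element
  set X : Fin n → G := fun i => (x i : G) with hX
  have hXmem : ∀ j, X j ∈ Gs j := fun j => (x j).2
  have commX : ∀ a ∈ Finset.univ, ∀ b ∈ Finset.univ, a ≠ b → Commute (X a) (X b) :=
    fun a _ b _ hab => hcomm a b hab _ (hXmem a) _ (hXmem b)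
  set xg := Finset.univ.noncommProd X commX with hxg
  -- conjugation of each Hs i by g is conjugation by f i
  have hgi : ∀ i, MulAut.conj g⁻¹ • Hs i = MulAut.conj ((f i : G))⁻¹ • Hs i := by
    intro i
    rw [← hf, hfval]
    exact key _ (fun j => (f j).2) _ i (Hs i) (hle i)
  have hxi : ∀ i, MulAut.conj xg⁻¹ • Hs i = MulAut.conj (X i)⁻¹ • Hs i :=
    fun i => key X hXmem _ i (Hs i) (hle i)
  refine ⟨xg, ?_, ?_⟩
  · refine Subgroup.noncommProd_mem _ _ ?_
    intro i _
    have h1 : Hs i ⊔ MulAut.conj ((f i : G))⁻¹ • Hs i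
        ≤ (⨆ j, Hs j) ⊔ MulAut.conj g⁻¹ • (⨆ j, Hs j) := by
      apply sup_le_sup (le_iSup Hs i)
      rw [← hgi i]
      exact Subgroup.pointwise_smul_le_pointwise_smul_iff.mpr (le_iSup Hs i)
    exact h1 (hx1' i)
  · have hsmul : ∀ (a : G), MulAut.conj a • (⨆ j, Hs j) = ⨆ j, MulAut.conj a • Hs j := by
      intro a
      simp only [Subgroup.pointwise_smul_def]
      exact Subgroup.map_iSup _ _
    rw [hsmul, hsmul]
    refine iSup_congr fun i => ?_
    rw [hxi i, hx2' i, ← hgi i]
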